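/- Let S be a real M×N matrix and let R be any positive integer with R ≥ rank(S). Then ‖S‖_* = min { ½(‖U‖_F² + ‖V‖_F²) : U is a real M×R matrix, V is a real N×R matrix, and U Vᵀ = S }, and the minimum is attained; that is, the nuclear norm equals the minimal average of squared Frobenius norms of the factors over all rank-R factorizations of S, and ½(‖U‖_F² + ‖V‖_F²) ≥ ‖U Vᵀ‖_* for every such U, V. -/

import Mathlib

open Matrix BigOperators

/-- The nuclear norm of a real matrix: the sum of its singular values, i.e. the sum of
the square roots of the (nonnegative real) eigenvalues of `Aᵀ * A` (= `Aᴴ * A` over `ℝ`). -/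
noncomputable def nuclearNorm {M N : ℕ} (A : Matrix (Fin M) (Fin N) ℝ) : ℝ :=
  ∑ i, Real.sqrt ((show (Aᵀ * A).IsHermitian by
    rw [← Matrix.conjTranspose_eq_transpose_of_trivial]; exact Matrix.isHermitian_conjTranspose_mul_self A).eigenvalues i)

/-- Squared Frobenius norm: sum of squared entries. -/
noncomputable def frobSq {M N : ℕ} (A : Matrix (Fin M) (Fin N) ℝ) : ℝ :=
  ∑ m, ∑ n, (A m n) ^ 2

namespace NuclearAux

lemma herm_tmul {m n : ℕ} (A : Matrix (Fin m) (Fin n) ℝ) : (Aᵀ * A).IsHermitian := by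
  rw [← Matrix.conjTranspose_eq_transpose_of_trivial]; exact Matrix.isHermitian_conjTranspose_mul_self A

/-- eigenvalues of `Aᵀ A` -/
noncomputable def ev {m n : ℕ} (A : Matrix (Fin m) (Fin n) ℝ) : Fin n → ℝ :=
  (herm_tmul A).eigenvalues

/-- orthonormal eigenvectors of `Aᵀ A` -/
noncomputable def evec {m n : ℕ} (A : Matrix (Fin m) (Fin n) ℝ) (i : Fin n) : Fin n → ℝ :=
  ((herm_tmul A).eigenvectorBasis i : EuclideanSpace ℝ (Fin n))

lemma nuclearNorm_eq {m n : ℕ} (A : Matrix (Fin m) (Fin n) ℝ) :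
    nuclearNorm A = ∑ i, Real.sqrt (ev A i) := rfl

lemma ev_nonneg {m n : ℕ} (A : Matrix (Fin m) (Fin n) ℝ) (i : Fin n) : 0 ≤ ev A i :=
  by
    have h := Matrix.posSemidef_conjTranspose_mul_self A
    rw [Matrix.conjTranspose_eq_transpose_of_trivial] at h
    exact h.eigenvalues_nonneg i

lemma mulVec_evec {m n : ℕ} (A : Matrix (Fin m) (Fin n) ℝ) (i : Fin n) :
    (Aᵀ * A) *ᵥ evec A i = ev A i • evec A i :=
  (herm_tmul A).mulVec_eigenvectorBasis i

lemma evec_dot {m n : ℕ} (A : Matrix (Fin m) (Fin n) ℝ) (i j : Fin n) :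
    evec A i ⬝ᵥ evec A j = if i = j then 1 else 0 := by
  have h := (herm_tmul A).eigenvectorBasis.orthonormal
  rw [orthonormal_iff_ite] at h
  have := h i j
  simpa [PiLp.inner_apply, RCLike.inner_apply, starRingEnd_apply, dotProduct, evec, mul_comm] using this

lemma evec_sum {m n : ℕ} (A : Matrix (Fin m) (Fin n) ℝ) (k l : Fin n) :
    ∑ i, evec A i k * evec A i l = if k = l then 1 else 0 := by
  set X : Matrix (Fin n) (Fin n) ℝ := Matrix.of (fun i k => evec A i k) with hX
  have h1 : X * Xᵀ = 1 := by
    ext i j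
    simpa [hX, Matrix.mul_apply, Matrix.one_apply, dotProduct] using evec_dot A i j
  have h2 : Xᵀ * X = 1 := mul_eq_one_comm.mp h1
  have := congr_fun (congr_fun h2 k) l
  simpa [hX, Matrix.mul_apply, Matrix.one_apply, mul_comm] using this

lemma dot_A {m n : ℕ} (A : Matrix (Fin m) (Fin n) ℝ) (a b : Fin n → ℝ) :
    (A *ᵥ a) ⬝ᵥ (A *ᵥ b) = ((Aᵀ * A) *ᵥ a) ⬝ᵥ b := by
  rw [Matrix.dotProduct_mulVec, ← Matrix.mulVec_transpose, Matrix.mulVec_mulVec]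

lemma dot_mulVec_evec {m n : ℕ} (A : Matrix (Fin m) (Fin n) ℝ) (i j : Fin n) :
    (A *ᵥ evec A i) ⬝ᵥ (A *ᵥ evec A j) = if i = j then ev A i else 0 := by
  rw [dot_A, mulVec_evec, smul_dotProduct, smul_eq_mul, evec_dot]
  by_cases h : i = j <;> simp [h]

lemma mulVec_evec_eq_zero {m n : ℕ} (A : Matrix (Fin m) (Fin n) ℝ) (i : Fin n)
    (h : ev A i = 0) : A *ᵥ evec A i = 0 := by
  have h1 := dot_mulVec_evec A i i
  simp only [if_pos rfl, h] at h1
  funext k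
  have h2 : ∑ l, (A *ᵥ evec A i) l ^ 2 = 0 := by
    simpa [dotProduct, pow_two] using h1
  have h3 : ∀ l ∈ Finset.univ, (0:ℝ) ≤ (A *ᵥ evec A i) l ^ 2 := fun l _ => sq_nonneg _
  have := (Finset.sum_eq_zero_iff_of_nonneg h3).mp h2 k (Finset.mem_univ k)
  exact pow_eq_zero_iff (by norm_num) |>.mp this

/-- Parseval for the orthonormal eigenbasis. -/
lemma parseval {m n : ℕ} (A : Matrix (Fin m) (Fin n) ℝ) (w : Fin n → ℝ) :
    ∑ i, (evec A i ⬝ᵥ w) ^ 2 = w ⬝ᵥ w := by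
  have : ∀ i : Fin n, (evec A i ⬝ᵥ w) ^ 2
      = ∑ k, ∑ l, (evec A i k * evec A i l) * (w k * w l) := by
    intro i
    rw [pow_two, dotProduct, Finset.sum_mul_sum]
    apply Finset.sum_congr rfl; intro k _
    apply Finset.sum_congr rfl; intro l _
    ring
  rw [Finset.sum_congr rfl (fun i _ => this i), Finset.sum_comm]
  have : ∀ k : Fin n, ∑ i, ∑ l, (evec A i k * evec A i l) * (w k * w l)
      = ∑ l, (∑ i, evec A i k * evec A i l) * (w k * w l) := by
    intro k
    rw [Finset.sum_comm]
    exact Finset.sum_congr rfl fun l _ => (Finset.sum_mul _ _ _).symm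
  rw [Finset.sum_congr rfl (fun k _ => this k)]
  simp [evec_sum, dotProduct, pow_two, mul_comm]

lemma sum_dotProduct' {m : ℕ} {ι : Type*} [Fintype ι] (f : ι → Fin m → ℝ) (w : Fin m → ℝ) :
    (∑ i, f i) ⬝ᵥ w = ∑ i, f i ⬝ᵥ w := by
  simp only [dotProduct, Finset.sum_apply, Finset.sum_mul]
  rw [Finset.sum_comm]

lemma dotProduct_sum' {m : ℕ} {ι : Type*} [Fintype ι] (w : Fin m → ℝ) (f : ι → Fin m → ℝ) :
    w ⬝ᵥ (∑ i, f i) = ∑ i, w ⬝ᵥ f i := by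
  rw [dotProduct_comm, sum_dotProduct']
  exact Finset.sum_congr rfl fun i _ => dotProduct_comm _ _

/-- Bessel-type inequality for a pairwise-orthogonal family with norms ≤ 1. -/
lemma bessel {m : ℕ} {ι : Type*} [Fintype ι] (u : ι → Fin m → ℝ)
    (horth : ∀ i j, i ≠ j → u i ⬝ᵥ u j = 0) (hnorm : ∀ i, u i ⬝ᵥ u i ≤ 1)
    (w : Fin m → ℝ) : ∑ i, (u i ⬝ᵥ w) ^ 2 ≤ w ⬝ᵥ w := by
  classical
  set c : ι → ℝ := fun i => u i ⬝ᵥ w with hc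
  set d : Fin m → ℝ := w - ∑ i, c i • u i with hd
  have hdd : 0 ≤ d ⬝ᵥ d := by
    simp only [dotProduct]
    exact Finset.sum_nonneg fun k _ => mul_self_nonneg _
  have expand : d ⬝ᵥ d = w ⬝ᵥ w - 2 * ∑ i, c i ^ 2 + ∑ i, c i ^ 2 * (u i ⬝ᵥ u i) := by
    have hcross : ∀ i, (c i • u i) ⬝ᵥ w = c i ^ 2 := by
      intro i; rw [smul_dotProduct, smul_eq_mul, hc, pow_two]
    have hsq : (∑ i, c i • u i) ⬝ᵥ (∑ j, c j • u j) = ∑ i, c i ^ 2 * (u i ⬝ᵥ u i) := by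
      rw [sum_dotProduct']
      have : ∀ i : ι, (c i • u i) ⬝ᵥ (∑ j, c j • u j) = c i ^ 2 * (u i ⬝ᵥ u i) := by
        intro i
        rw [dotProduct_sum']
        rw [Finset.sum_eq_single i]
        · rw [smul_dotProduct, dotProduct_smul, smul_eq_mul, smul_eq_mul]; ring
        · intro j _ hji
          rw [smul_dotProduct, dotProduct_smul, smul_eq_mul, smul_eq_mul,
            horth i j (fun h => hji h.symm)]
          ring
        · intro h; exact absurd (Finset.mem_univ i) h
      exact Finset.sum_congr rfl fun i _ => this i
    have hws : w ⬝ᵥ (∑ i, c i • u i) = ∑ i, c i ^ 2 := by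
      rw [dotProduct_sum']
      apply Finset.sum_congr rfl; intro i _
      rw [dotProduct_smul, smul_eq_mul, dotProduct_comm, pow_two]
    have hsw : (∑ i, c i • u i) ⬝ᵥ w = ∑ i, c i ^ 2 := by
      rw [dotProduct_comm]; exact hws
    rw [hd, sub_dotProduct, dotProduct_sub, dotProduct_sub, hws, hsw, hsq]
    ring
  have hle : ∑ i, c i ^ 2 * (u i ⬝ᵥ u i) ≤ ∑ i, c i ^ 2 := by
    apply Finset.sum_le_sum
    intro i _
    calc c i ^ 2 * (u i ⬝ᵥ u i) ≤ c i ^ 2 * 1 :=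
          mul_le_mul_of_nonneg_left (hnorm i) (sq_nonneg _)
      _ = c i ^ 2 := mul_one _
  nlinarith [hdd, expand, hle]

/-- Collapsing a double sum over an embedding. -/
lemma embed_sum_mul {ι : Type*} [Fintype ι] {R : ℕ} (f : ι ↪ Fin R) (a b : ι → ℝ) :
    ∑ r : Fin R, (∑ i, if f i = r then a i else 0) * (∑ j, if f j = r then b j else 0)
      = ∑ i, a i * b i := by
  classical
  have step : ∀ r : Fin R, (∑ i, if f i = r then a i else 0) * (∑ j, if f j = r then b j else 0)
      = ∑ i, ∑ j, (if f i = r then a i else 0) * (if f j = r then b j else 0) :=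
    fun r => Finset.sum_mul_sum _ _ _ _
  rw [Finset.sum_congr rfl fun r _ => step r, Finset.sum_comm]
  have step2 : ∀ i : ι, ∑ r : Fin R, ∑ j,
      (if f i = r then a i else 0) * (if f j = r then b j else 0)
      = ∑ j, ∑ r : Fin R, (if f i = r then a i else 0) * (if f j = r then b j else 0) :=
    fun i => Finset.sum_comm
  rw [Finset.sum_congr rfl fun i _ => step2 i]
  apply Finset.sum_congr rfl; intro i _
  have inner : ∀ j : ι, ∑ r : Fin R, (if f i = r then a i else 0) * (if f j = r then b j else 0)
      = if i = j then a i * b i else 0 := by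
    intro j
    by_cases hij : i = j
    · subst hij
      simp only [if_pos rfl]
      rw [Finset.sum_eq_single (f i)]
      · simp
      · intro r _ hr; simp [Ne.symm hr]
      · intro h; exact absurd (Finset.mem_univ _) h
    · have hfij : f i ≠ f j := fun h => hij (f.injective h)
      rw [if_neg hij]
      apply Finset.sum_eq_zero
      intro r _
      by_cases h1 : f i = r
      · have hne : f j ≠ r := fun h => hfij (h1.trans h.symm)
        rw [if_neg hne]; ring
      · rw [if_neg h1]; ring
  rw [Finset.sum_congr rfl fun j _ => inner j]
  simp

/-- AM-GM for dot products. -/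
lemma dot_le_half {R : ℕ} (p q : Fin R → ℝ) :
    p ⬝ᵥ q ≤ (1 / 2) * (p ⬝ᵥ p + q ⬝ᵥ q) := by
  have h : 0 ≤ (p - q) ⬝ᵥ (p - q) := by
    simp only [dotProduct]
    exact Finset.sum_nonneg fun k _ => mul_self_nonneg _
  rw [sub_dotProduct, dotProduct_sub, dotProduct_sub,
    dotProduct_comm q p] at h
  linarith

/-- The key inequality: nuclear norm of `U * Vᵀ` is at most the average of squared
Frobenius norms. -/
lemma key_ineq {M N R : ℕ} (U : Matrix (Fin M) (Fin R) ℝ) (V : Matrix (Fin N) (Fin R) ℝ) :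
    nuclearNorm (U * Vᵀ) ≤ (1 / 2) * (frobSq U + frobSq V) := by
  classical
  set B : Matrix (Fin M) (Fin N) ℝ := U * Vᵀ with hB
  set lam : Fin N → ℝ := ev B with hlam
  set y : Fin N → Fin N → ℝ := evec B with hy
  set sig : Fin N → ℝ := fun i => Real.sqrt (lam i) with hsig
  set u : Fin N → Fin M → ℝ :=
    fun i => if lam i = 0 then 0 else (sig i)⁻¹ • (B *ᵥ y i) with hu
  have hsig_sq : ∀ i, sig i ^ 2 = lam i := fun i => Real.sq_sqrt (ev_nonneg B i)
  have hsig_ne : ∀ i, lam i ≠ 0 → sig i ≠ 0 := fun i h =>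
    Real.sqrt_ne_zero'.mpr (lt_of_le_of_ne (ev_nonneg B i) (Ne.symm h))
  -- u dot u
  have hudot : ∀ i j, u i ⬝ᵥ u j
      = if i = j ∧ lam i ≠ 0 then 1 else 0 := by
    intro i j
    by_cases hi : lam i = 0
    · simp [hu, hi]
    by_cases hj : lam j = 0
    · have : ¬ (i = j ∧ lam i ≠ 0) := by
        rintro ⟨rfl, h⟩; exact h hj
      simp [hu, hj, this]
    · simp only [hu, if_neg hi, if_neg hj]
      rw [smul_dotProduct, dotProduct_smul, smul_eq_mul, smul_eq_mul]
      rw [dot_mulVec_evec]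
      by_cases hij : i = j
      · subst hij
        rw [if_pos rfl, if_pos (⟨rfl, hi⟩ : i = i ∧ lam i ≠ 0)]
        have h1 : ev B i = sig i * sig i := by
          have h2 := hsig_sq i; rw [pow_two] at h2; exact h2.symm
        rw [h1]
        field_simp [hsig_ne i hi]
      · simp [hij]
  -- sigma as dot product
  have hsig_dot : ∀ i, sig i = (Uᵀ *ᵥ u i) ⬝ᵥ (Vᵀ *ᵥ y i) := by
    intro i
    have key : (Uᵀ *ᵥ u i) ⬝ᵥ (Vᵀ *ᵥ y i) = u i ⬝ᵥ (B *ᵥ y i) := by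
      rw [Matrix.mulVec_transpose, ← Matrix.dotProduct_mulVec, Matrix.mulVec_mulVec, ← hB]
    rw [key]
    by_cases hi : lam i = 0
    · simp [hu, hi, hsig]
    · simp only [hu, if_neg hi]
      rw [smul_dotProduct, smul_eq_mul]
      have h2 : (B *ᵥ y i) ⬝ᵥ (B *ᵥ y i) = lam i := by
        have := dot_mulVec_evec B i i
        simpa [hy, hlam] using this
      rw [h2, ← hsig_sq i]
      field_simp [hsig_ne i hi]
  -- nuclear norm bound
  have main : nuclearNorm B ≤
      (1/2) * ((∑ i, (Uᵀ *ᵥ u i) ⬝ᵥ (Uᵀ *ᵥ u i)) + ∑ i, (Vᵀ *ᵥ y i) ⬝ᵥ (Vᵀ *ᵥ y i)) := by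
    rw [nuclearNorm_eq]
    calc ∑ i, Real.sqrt (ev B i) = ∑ i, sig i := rfl
      _ ≤ ∑ i, (1/2) * ((Uᵀ *ᵥ u i) ⬝ᵥ (Uᵀ *ᵥ u i) + (Vᵀ *ᵥ y i) ⬝ᵥ (Vᵀ *ᵥ y i)) := by
          apply Finset.sum_le_sum
          intro i _
          rw [hsig_dot i]
          exact dot_le_half _ _
      _ = (1/2) * ((∑ i, (Uᵀ *ᵥ u i) ⬝ᵥ (Uᵀ *ᵥ u i)) + ∑ i, (Vᵀ *ᵥ y i) ⬝ᵥ (Vᵀ *ᵥ y i)) := by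
          rw [← Finset.sum_add_distrib, Finset.mul_sum]
  -- bound the U part by Bessel
  have hUpart : ∑ i, (Uᵀ *ᵥ u i) ⬝ᵥ (Uᵀ *ᵥ u i) ≤ frobSq U := by
    have expand : ∀ i : Fin N, (Uᵀ *ᵥ u i) ⬝ᵥ (Uᵀ *ᵥ u i)
        = ∑ r, (u i ⬝ᵥ (fun m => U m r)) ^ 2 := by
      intro i
      simp only [dotProduct, Matrix.mulVec, Matrix.transpose_apply, pow_two, dotProduct]
      apply Finset.sum_congr rfl; intro r _
      congr 1 <;> · apply Finset.sum_congr rfl; intro m _; ring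
    rw [Finset.sum_congr rfl fun i _ => expand i, Finset.sum_comm]
    have colbound : ∀ r : Fin R, ∑ i, (u i ⬝ᵥ (fun m => U m r)) ^ 2
        ≤ (fun m => U m r) ⬝ᵥ (fun m => U m r) := by
      intro r
      apply bessel
      · intro i j hij
        rw [hudot]
        simp [hij]
      · intro i
        rw [hudot]
        split <;> norm_num
    calc ∑ r, ∑ i, (u i ⬝ᵥ (fun m => U m r)) ^ 2
        ≤ ∑ r, (fun m => U m r) ⬝ᵥ (fun m => U m r) :=
          Finset.sum_le_sum fun r _ => colbound r
      _ = frobSq U := by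
          rw [frobSq, Finset.sum_comm]
          apply Finset.sum_congr rfl; intro r _
          simp [dotProduct, pow_two]
  -- V part exactly
  have hVpart : ∑ i, (Vᵀ *ᵥ y i) ⬝ᵥ (Vᵀ *ᵥ y i) = frobSq V := by
    have expand : ∀ i : Fin N, (Vᵀ *ᵥ y i) ⬝ᵥ (Vᵀ *ᵥ y i)
        = ∑ r, (y i ⬝ᵥ (fun n => V n r)) ^ 2 := by
      intro i
      simp only [dotProduct, Matrix.mulVec, Matrix.transpose_apply, pow_two, dotProduct]
      apply Finset.sum_congr rfl; intro r _
      congr 1 <;> · apply Finset.sum_congr rfl; intro nn _; ring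
    rw [Finset.sum_congr rfl fun i _ => expand i, Finset.sum_comm]
    have colexact : ∀ r : Fin R, ∑ i, (y i ⬝ᵥ (fun n => V n r)) ^ 2
        = (fun n => V n r) ⬝ᵥ (fun n => V n r) := fun r => parseval B _
    rw [Finset.sum_congr rfl fun r _ => colexact r, frobSq, Finset.sum_comm]
    apply Finset.sum_congr rfl; intro r _
    simp [dotProduct, pow_two]
  calc nuclearNorm B ≤ _ := main
    _ ≤ (1/2) * (frobSq U + frobSq V) := by
        have h2 : (0:ℝ) < 2 := by norm_num
        apply mul_le_mul_of_nonneg_left _ (by norm_num : (0:ℝ) ≤ 1/2)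
        linarith [hUpart, hVpart.le, hVpart.ge]

lemma sum_subtype_eq_sum {N : ℕ} (p : Fin N → Prop) [DecidablePred p] (g : Fin N → ℝ)
    (h0 : ∀ i, ¬ p i → g i = 0) : ∑ i : {i // p i}, g i.1 = ∑ i, g i := by
  rw [← Finset.sum_subtype (Finset.univ.filter p) (by simp) g]
  apply Finset.sum_subset (Finset.filter_subset _ _)
  intro i _ hi
  exact h0 i (by simpa using hi)

/-- Collapsing squared sums over an embedding. -/
lemma embed_sum_sq {ι : Type*} [Fintype ι] {R : ℕ} (f : ι ↪ Fin R) (a : ι → ℝ) :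
    ∑ r : Fin R, (∑ i, if f i = r then a i else 0) ^ 2 = ∑ i, a i ^ 2 := by
  simp only [pow_two]
  exact embed_sum_mul f a a

/-- The attainment: an optimal factorization exists. -/
lemma exists_optimal {M N : ℕ} (S : Matrix (Fin M) (Fin N) ℝ) (R : ℕ) (hR : S.rank ≤ R) :
    ∃ (U : Matrix (Fin M) (Fin R) ℝ) (V : Matrix (Fin N) (Fin R) ℝ),
      U * Vᵀ = S ∧ nuclearNorm S = (1 / 2) * (frobSq U + frobSq V) := by
  classical
  set T := {i : Fin N // ev S i ≠ 0} with hT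
  have hcard : Fintype.card T ≤ R := by
    have h1 : (Sᴴ * S).rank = Fintype.card T :=
      (herm_tmul S).rank_eq_card_non_zero_eigs
    have h2 : (Sᴴ * S).rank = S.rank := Matrix.rank_conjTranspose_mul_self S
    omega
  obtain ⟨f⟩ : Nonempty (T ↪ Fin R) :=
    Function.Embedding.nonempty_of_card_le (by simpa using hcard)
  set sig : Fin N → ℝ := fun i => Real.sqrt (ev S i) with hsig
  have hsig_nonneg : ∀ i, 0 ≤ sig i := fun i => Real.sqrt_nonneg _
  have hsig_pos : ∀ i : T, 0 < sig i.1 := fun i =>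
    Real.sqrt_pos.mpr (lt_of_le_of_ne (ev_nonneg S i.1) (Ne.symm i.2))
  have hsig_sq : ∀ i, sig i ^ 2 = ev S i := fun i => Real.sq_sqrt (ev_nonneg S i)
  set U : Matrix (Fin M) (Fin R) ℝ := Matrix.of fun m r =>
    ∑ i : T, if f i = r then (Real.sqrt (sig i.1))⁻¹ * (S *ᵥ evec S i.1) m else 0 with hU
  set V : Matrix (Fin N) (Fin R) ℝ := Matrix.of fun n r =>
    ∑ i : T, if f i = r then Real.sqrt (sig i.1) * evec S i.1 n else 0 with hV
  have hrt_pos : ∀ i : T, 0 < Real.sqrt (sig i.1) := fun i => Real.sqrt_pos.mpr (hsig_pos i)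
  refine ⟨U, V, ?_, ?_⟩
  · -- factorization
    ext m n
    have h1 : (U * Vᵀ) m n = ∑ r, U m r * V n r := by
      simp [Matrix.mul_apply, Matrix.transpose_apply]
    rw [h1]
    have h2 : ∑ r, U m r * V n r
        = ∑ i : T, ((Real.sqrt (sig i.1))⁻¹ * (S *ᵥ evec S i.1) m)
            * (Real.sqrt (sig i.1) * evec S i.1 n) :=
      embed_sum_mul f _ _
    rw [h2]
    have h3 : ∀ i : T, ((Real.sqrt (sig i.1))⁻¹ * (S *ᵥ evec S i.1) m)
        * (Real.sqrt (sig i.1) * evec S i.1 n)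
        = (S *ᵥ evec S i.1) m * evec S i.1 n := by
      intro i
      field_simp [(hrt_pos i).ne']
    rw [Finset.sum_congr rfl fun i _ => h3 i]
    have h4 : ∑ i : T, (S *ᵥ evec S i.1) m * evec S i.1 n
        = ∑ i : Fin N, (S *ᵥ evec S i) m * evec S i n := by
      refine sum_subtype_eq_sum (fun i => ev S i ≠ 0)
        (fun i => (S *ᵥ evec S i) m * evec S i n) ?_
      intro i hi
      rw [not_not] at hi
      show (S *ᵥ evec S i) m * evec S i n = 0
      rw [mulVec_evec_eq_zero S i hi]
      simp
    rw [h4]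
    calc ∑ i : Fin N, (S *ᵥ evec S i) m * evec S i n
        = ∑ i : Fin N, ∑ k, S m k * (evec S i k * evec S i n) := by
          apply Finset.sum_congr rfl; intro i _
          rw [Matrix.mulVec, dotProduct, Finset.sum_mul]
          apply Finset.sum_congr rfl; intro k _; ring
      _ = ∑ k, ∑ i : Fin N, S m k * (evec S i k * evec S i n) := Finset.sum_comm
      _ = ∑ k, S m k * (∑ i, evec S i k * evec S i n) := by
          apply Finset.sum_congr rfl; intro k _; rw [Finset.mul_sum]
      _ = S m n := by simp [evec_sum]
  · -- value equality
    have hfU : frobSq U = ∑ i : T, sig i.1 := by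
      rw [frobSq]
      have h1 : ∀ m, ∑ r, (U m r) ^ 2
          = ∑ i : T, ((Real.sqrt (sig i.1))⁻¹ * (S *ᵥ evec S i.1) m) ^ 2 :=
        fun m => embed_sum_sq f _
      rw [Finset.sum_congr rfl fun m _ => h1 m, Finset.sum_comm]
      apply Finset.sum_congr rfl
      intro i _
      have expand : ∑ m, ((Real.sqrt (sig i.1))⁻¹ * (S *ᵥ evec S i.1) m) ^ 2
          = (Real.sqrt (sig i.1))⁻¹ ^ 2 * ((S *ᵥ evec S i.1) ⬝ᵥ (S *ᵥ evec S i.1)) := by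
        rw [dotProduct, Finset.mul_sum]
        apply Finset.sum_congr rfl; intro m _; ring
      rw [expand, dot_mulVec_evec, if_pos rfl]
      rw [inv_pow, Real.sq_sqrt (hsig_nonneg i.1), ← hsig_sq i.1]
      field_simp [(hsig_pos i).ne']
    have hfV : frobSq V = ∑ i : T, sig i.1 := by
      rw [frobSq]
      have h1 : ∀ n, ∑ r, (V n r) ^ 2
          = ∑ i : T, (Real.sqrt (sig i.1) * evec S i.1 n) ^ 2 :=
        fun n => embed_sum_sq f _
      rw [Finset.sum_congr rfl fun n _ => h1 n, Finset.sum_comm]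
      apply Finset.sum_congr rfl
      intro i _
      have expand : ∑ n, (Real.sqrt (sig i.1) * evec S i.1 n) ^ 2
          = Real.sqrt (sig i.1) ^ 2 * (evec S i.1 ⬝ᵥ evec S i.1) := by
        rw [dotProduct, Finset.mul_sum]
        apply Finset.sum_congr rfl; intro n _; ring
      rw [expand, evec_dot, if_pos rfl, Real.sq_sqrt (hsig_nonneg i.1), mul_one]
    have hnn : nuclearNorm S = ∑ i : T, sig i.1 := by
      rw [nuclearNorm_eq]
      rw [← sum_subtype_eq_sum (fun i => ev S i ≠ 0) (fun i => Real.sqrt (ev S i))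
        (fun i hi => by
          rw [not_not] at hi
          show Real.sqrt (ev S i) = 0
          rw [hi, Real.sqrt_zero])]
    rw [hfU, hfV, hnn]
    ring

end NuclearAux

/-- The nuclear norm is the minimal value of `½(‖U‖_F² + ‖V‖_F²)` over all factorizations
`S = U Vᵀ` with inner dimension `R ≥ rank S`, the minimum is attained, and
`½(‖U‖_F² + ‖V‖_F²) ≥ ‖U Vᵀ‖_*` for every `U : M × R`, `V : N × R`. -/
theorem nuclearNorm_eq_min_factorization
    {M N : ℕ} (S : Matrix (Fin M) (Fin N) ℝ) (R : ℕ) (hR0 : 0 < R) (hR : S.rank ≤ R) :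
    IsLeast {x : ℝ | ∃ (U : Matrix (Fin M) (Fin R) ℝ) (V : Matrix (Fin N) (Fin R) ℝ),
        U * Vᵀ = S ∧ x = (1 / 2) * (frobSq U + frobSq V)}
      (nuclearNorm S) ∧
    ∀ (U : Matrix (Fin M) (Fin R) ℝ) (V : Matrix (Fin N) (Fin R) ℝ),
      nuclearNorm (U * Vᵀ) ≤ (1 / 2) * (frobSq U + frobSq V) := by
  refine ⟨⟨?_, ?_⟩, fun U V => NuclearAux.key_ineq U V⟩
  · obtain ⟨U, V, hUV, hval⟩ := NuclearAux.exists_optimal S R hR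
    exact ⟨U, V, hUV, hval⟩
  · rintro x ⟨U, V, hUV, rfl⟩
    have h := NuclearAux.key_ineq U V
    rw [hUV] at h
    exact h
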